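/- Lower bound on the convex-roof I-concurrence: for any bipartite density matrix ρ on C^N ⊗ C^N, the I-concurrence C[ρ] = min over pure decompositions Σₖ pₖ √(2(1 − tr((tr₂|ψₖ⟩⟨ψₖ|)²))) satisfies C[ρ] ≥ √(2/(N(N−1))) · max{‖ρ^{T₁}‖₁ − 1, ‖ρ^{T₂}‖₁ − 1}. -/

import Mathlib

open Matrix
open scoped Kronecker Classical ComplexOrder

noncomputable section

/-- A density matrix: positive semidefinite with unit trace. -/
def IsDensity {N : Type*} [Fintype N] (ρ : Matrix N N ℂ) : Prop :=
  ρ.PosSemidef ∧ ρ.trace = 1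

/-- Outer product `|ψ⟩⟨ψ|`. -/
def outer {N : Type*} (ψ : N → ℂ) : Matrix N N ℂ :=
  Matrix.of fun i j => ψ i * star (ψ j)

/-- Squared norm of a vector. -/
def vnormSq {N : Type*} [Fintype N] (ψ : N → ℂ) : ℝ := ∑ x, ‖ψ x‖ ^ 2

/-- Partial transpose with respect to the first tensor factor. -/
def pt₁ {m n : Type*} (ρ : Matrix (m × n) (m × n) ℂ) : Matrix (m × n) (m × n) ℂ :=
  Matrix.of fun p q => ρ (q.1, p.2) (p.1, q.2)

/-- Partial transpose with respect to the second tensor factor. -/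
def pt₂ {m n : Type*} (ρ : Matrix (m × n) (m × n) ℂ) : Matrix (m × n) (m × n) ℂ :=
  Matrix.of fun p q => ρ (p.1, q.2) (q.1, p.2)

/-- Partial trace over the first tensor factor. -/
def ptr₁ {m n : Type*} [Fintype m] (ρ : Matrix (m × n) (m × n) ℂ) : Matrix n n ℂ :=
  Matrix.of fun j l => ∑ i, ρ (i, j) (i, l)

/-- Partial trace over the second tensor factor. -/
def ptr₂ {m n : Type*} [Fintype n] (ρ : Matrix (m × n) (m × n) ℂ) : Matrix m m ℂ :=
  Matrix.of fun i k => ∑ j, ρ (i, j) (k, j)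

/-- The positive semidefinite square root of a positive semidefinite matrix
(the definition `Matrix.PosSemidef.sqrt` of the older Mathlib, since removed). -/
def Matrix.PosSemidef.sqrt {n 𝕜 : Type*} [Fintype n] [DecidableEq n] [RCLike 𝕜]
    {A : Matrix n n 𝕜} (hA : A.PosSemidef) : Matrix n n 𝕜 :=
  hA.1.eigenvectorUnitary.1 * diagonal ((↑) ∘ (√·) ∘ hA.1.eigenvalues) *
  (star hA.1.eigenvectorUnitary : Matrix n n 𝕜)

/-- Trace norm (sum of singular values): `‖A‖₁ = tr √(AᴴA)`. -/
def traceNorm {N : Type*} [Fintype N] [DecidableEq N] (A : Matrix N N ℂ) : ℝ :=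
  ((Matrix.posSemidef_conjTranspose_mul_self A).sqrt.trace).re

/-- Purity `tr ρ²` (real part). -/
def purity {N : Type*} [Fintype N] (ρ : Matrix N N ℂ) : ℝ := ((ρ * ρ).trace).re

/-- Separability of a bipartite density matrix. -/
def Separable {m n : Type*} [Fintype m] [Fintype n]
    (ρ : Matrix (m × n) (m × n) ℂ) : Prop :=
  ∃ (k : ℕ) (p : Fin k → ℝ) (σ : Fin k → Matrix m m ℂ) (τ : Fin k → Matrix n n ℂ),
    (∀ i, 0 ≤ p i) ∧ (∑ i, p i = 1) ∧ (∀ i, IsDensity (σ i)) ∧ (∀ i, IsDensity (τ i)) ∧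
    ρ = ∑ i, (p i : ℂ) • (σ i ⊗ₖ τ i)

/-- Extension `E ⊗ id` of a map on the first factor to a bipartite space. -/
def tensExtA {s n : Type*} (E : Matrix s s ℂ → Matrix s s ℂ)
    (X : Matrix (s × n) (s × n) ℂ) : Matrix (s × n) (s × n) ℂ :=
  Matrix.of fun p q => E (Matrix.of fun i k => X (i, p.2) (k, q.2)) p.1 q.1

/-- Extension `id ⊗ A` of a map on the second factor to a bipartite space. -/
def tensExtSys {e s : Type*} (A : Matrix s s ℂ → Matrix s s ℂ)
    (X : Matrix (e × s) (e × s) ℂ) : Matrix (e × s) (e × s) ℂ :=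
  Matrix.of fun p q => A (Matrix.of fun i k => X (p.1, i) (q.1, k)) p.2 q.2

/-- Complete positivity: `E ⊗ id_n` maps PSD matrices to PSD matrices for every `n`. -/
def IsCP {s : Type*} [Fintype s] (E : Matrix s s ℂ → Matrix s s ℂ) : Prop :=
  ∀ (n : ℕ) (X : Matrix (s × Fin n) (s × Fin n) ℂ), X.PosSemidef → (tensExtA E X).PosSemidef

/-- Trace preservation. -/
def IsTP {s : Type*} [Fintype s] (E : Matrix s s ℂ → Matrix s s ℂ) : Prop :=
  ∀ X, (E X).trace = X.trace

/-- The maximally entangled unit vector `|Ψ⁺⟩ = (1/√d) Σᵢ |i⟩⊗|i⟩`. -/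
def maxEntVec (d : ℕ) : Fin d × Fin d → ℂ :=
  fun p => if p.1 = p.2 then (((Real.sqrt d)⁻¹ : ℝ) : ℂ) else 0

/-- The Choi state `χ[E] = (E ⊗ id)(|Ψ⁺⟩⟨Ψ⁺|)` of a map `E`. -/
def ChoiMap {d : ℕ} (E : Matrix (Fin d) (Fin d) ℂ → Matrix (Fin d) (Fin d) ℂ) :
    Matrix (Fin d × Fin d) (Fin d × Fin d) ℂ :=
  tensExtA E (outer (maxEntVec d))

/-- Choi state of a single-intervention process tensor `T`, viewed as a function of the
initial system state and the intervention (a CP map). The first index pair is the first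
time segment (intervention input leg, initial state leg), the second pair is the second
time segment (final state leg, intervention output leg). It is obtained by letting `T`
act on halves of maximally entangled pairs, i.e. on matrix units with `1/d` weights. -/
def ChoiPT {d : ℕ}
    (T : Matrix (Fin d) (Fin d) ℂ →
      (Matrix (Fin d) (Fin d) ℂ → Matrix (Fin d) (Fin d) ℂ) → Matrix (Fin d) (Fin d) ℂ) :
    Matrix ((Fin d × Fin d) × (Fin d × Fin d)) ((Fin d × Fin d) × (Fin d × Fin d)) ℂ :=
  Matrix.of fun p q => (d : ℂ)⁻¹ * (d : ℂ)⁻¹ *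
    (T (Matrix.single p.1.2 q.1.2 1)
       (fun ρ => ρ p.1.1 q.1.1 • Matrix.single p.2.2 q.2.2 1)) p.2.1 q.2.1

/-- A single-intervention process tensor has classical memory if it is a composition of
conditioned instruments: `T[ρ, A] = Σᵢ Φᵢ(A(Iᵢ(ρ)))` with `{Iᵢ}` a quantum instrument
(each `Iᵢ` CP, their sum trace preserving) and each `Φᵢ` a CPT map. -/
def HasClassicalMemory {d : ℕ}
    (T : Matrix (Fin d) (Fin d) ℂ →
      (Matrix (Fin d) (Fin d) ℂ → Matrix (Fin d) (Fin d) ℂ) → Matrix (Fin d) (Fin d) ℂ) :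
    Prop :=
  ∃ (k : ℕ) (I Φ : Fin k → (Matrix (Fin d) (Fin d) ℂ → Matrix (Fin d) (Fin d) ℂ)),
    (∀ i, IsLinearMap ℂ (I i)) ∧ (∀ i, IsCP (I i)) ∧ IsTP (fun ρ => ∑ i, I i ρ) ∧
    (∀ i, IsLinearMap ℂ (Φ i)) ∧ (∀ i, IsCP (Φ i)) ∧ (∀ i, IsTP (Φ i)) ∧
    (∀ ρ A, T ρ A = ∑ i, Φ i (A (I i ρ)))

/-- Action of a Kraus operator on the first factor of a bipartite vector: `(L ⊗ I)ψ`. -/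
def lact {m n : Type*} [Fintype m] (L : Matrix m m ℂ) (ψ : m × n → ℂ) : m × n → ℂ :=
  fun p => ∑ i, L p.1 i * ψ (i, p.2)

/-- Concurrence of a pure bipartite state: `C(ψ) = √(2(1 − tr((tr₂|ψ⟩⟨ψ|)²)))`. -/
def concPure {m n : Type*} [Fintype m] [Fintype n] (ψ : m × n → ℂ) : ℝ :=
  Real.sqrt (2 * (1 - purity (ptr₂ (outer ψ))))

/-- The set of average values `Σₖ pₖ f(ψₖ)` over all pure-state decompositions of `ρ`. -/
def decompAvgs {m n : Type*} [Fintype m] [Fintype n]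
    (f : (m × n → ℂ) → ℝ) (ρ : Matrix (m × n) (m × n) ℂ) : Set ℝ :=
  { r | ∃ (k : ℕ) (p : Fin k → ℝ) (ψ : Fin k → m × n → ℂ),
      (∀ i, 0 < p i) ∧ (∑ i, p i = 1) ∧ (∀ i, vnormSq (ψ i) = 1) ∧
      (ρ = ∑ i, (p i : ℂ) • outer (ψ i)) ∧ r = ∑ i, p i * f (ψ i) }

/-- An entanglement monotone: a nonnegative function of pure bipartite states whose
average does not increase under local CP operations (given by Kraus operators) on the
system (first) factor. -/
def IsEntMonotone {m n : Type*} [Fintype m] [Fintype n] (f : (m × n → ℂ) → ℝ) : Prop :=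
  (∀ ψ, 0 ≤ f ψ) ∧
  ∀ (k : ℕ) (L : Fin k → Matrix m m ℂ), (∑ j, (L j)ᴴ * L j) = 1 →
    ∀ ψ : m × n → ℂ, vnormSq ψ = 1 →
      (∑ j, if vnormSq (lact (L j) ψ) = 0 then 0 else
        vnormSq (lact (L j) ψ) *
          f (fun x => (((Real.sqrt (vnormSq (lact (L j) ψ)))⁻¹ : ℝ) : ℂ) * lact (L j) ψ x))
        ≤ f ψ

end

noncomputable section Helpers
namespace CAF
open scoped MatrixOrder
variable {n : Type*} [Fintype n] [DecidableEq n]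

/-- `U * diagonal d * Uᴴ` for real `d`. -/
def UD (U : Matrix n n ℂ) (d : n → ℝ) : Matrix n n ℂ :=
  U * Matrix.diagonal (fun i => (d i : ℂ)) * Uᴴ

lemma UD_mul {U : Matrix n n ℂ} (hU : Uᴴ * U = 1) (d e : n → ℝ) :
    UD U d * UD U e = UD U (fun i => d i * e i) := by
  simp only [UD, Matrix.mul_assoc]
  rw [← Matrix.mul_assoc Uᴴ U, hU, Matrix.one_mul,
    ← Matrix.mul_assoc (diagonal _) (diagonal _), Matrix.diagonal_mul_diagonal]
  push_cast
  ring_nf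

lemma UD_trace {U : Matrix n n ℂ} (hU : Uᴴ * U = 1) (d : n → ℝ) :
    (UD U d).trace = ∑ i, (d i : ℂ) := by
  rw [UD, Matrix.trace_mul_cycle, hU, Matrix.one_mul, Matrix.trace_diagonal]

lemma UD_psd {U : Matrix n n ℂ} (d : n → ℝ) (hd : ∀ i, 0 ≤ d i) :
    (UD U d).PosSemidef := by
  apply Matrix.PosSemidef.mul_mul_conjTranspose_same
  refine Matrix.posSemidef_diagonal_iff.mpr fun i => ?_
  exact_mod_cast Complex.zero_le_real.mpr (hd i)

lemma UD_herm {U : Matrix n n ℂ} (d : n → ℝ) : (UD U d).IsHermitian := by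
  unfold UD
  ext p q
  simp [Matrix.conjTranspose_apply, Matrix.mul_apply, Finset.sum_comm, diagonal,
    Matrix.conjTranspose_apply, mul_comm, mul_assoc, mul_left_comm]

lemma UD_sqrt {U : Matrix n n ℂ} (hU : Uᴴ * U = 1) (d : n → ℝ) (hd : ∀ i, 0 ≤ d i)
    (hP : (UD U d).PosSemidef) :
    hP.sqrt = UD U (fun i => Real.sqrt (d i)) := by
  have hs : hP.sqrt = cfc Real.sqrt (UD U d) := by
    rw [hP.1.cfc_eq]
    simp [Matrix.PosSemidef.sqrt, Matrix.IsHermitian.cfc]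
  have h0 : (0 : Matrix n n ℂ) ≤ UD U d := hP.nonneg
  have h1 : (0 : Matrix n n ℂ) ≤ UD U (fun i => Real.sqrt (d i)) :=
    (UD_psd _ fun i => Real.sqrt_nonneg _).nonneg
  rw [hs, ← cfcₙ_eq_cfc (hf0 := by simp), ← CFC.sqrt_eq_real_sqrt _ h0]
  refine CFC.sqrt_unique ?_ h1
  rw [UD_mul hU]
  have : (fun i => Real.sqrt (d i) * Real.sqrt (d i)) = d := funext fun i => Real.mul_self_sqrt (hd i)
  rw [this]

end CAF

noncomputable section H2
namespace CAF
variable {n : Type*} [Fintype n] [DecidableEq n]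

lemma traceNorm_eq_of (A : Matrix n n ℂ) {X : Matrix n n ℂ} (hX : X.PosSemidef)
    (h : Aᴴ * A = X) : traceNorm A = (hX.sqrt.trace).re := by
  subst h; rfl

lemma traceNorm_UD {U : Matrix n n ℂ} (hU : Uᴴ * U = 1) (d : n → ℝ) :
    traceNorm (UD U d) = ∑ i, |d i| := by
  have hh : (UD U d)ᴴ * UD U d = UD U (fun i => d i * d i) := by
    rw [(UD_herm d).eq, UD_mul hU]
  rw [traceNorm_eq_of _ (UD_psd _ fun i => mul_self_nonneg _) hh,
    UD_sqrt hU _ (fun i => mul_self_nonneg _), UD_trace hU]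
  simp only [Real.sqrt_mul_self_eq_abs, ← Complex.ofReal_sum, Complex.ofReal_re]

lemma re_trace_sqrt {U : Matrix n n ℂ} (hU : Uᴴ * U = 1) (d : n → ℝ) (hd : ∀ i, 0 ≤ d i)
    {X : Matrix n n ℂ} (hX : X.PosSemidef) (h : X = UD U d) :
    (hX.sqrt.trace).re = ∑ i, Real.sqrt (d i) := by
  subst h
  rw [UD_sqrt hU _ hd, UD_trace hU, ← Complex.ofReal_sum]
  exact Complex.ofReal_re _

end CAF
end H2

noncomputable section H3
namespace CAF
variable {n : Type*} [Fintype n] [DecidableEq n]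

/-- Spectral representation of a Hermitian matrix. -/
lemma exists_rep {A : Matrix n n ℂ} (hA : A.IsHermitian) :
    ∃ (U : Matrix n n ℂ) (d : n → ℝ), Uᴴ * U = 1 ∧ U * Uᴴ = 1 ∧ A = UD U d ∧
      (A.PosSemidef → ∀ i, 0 ≤ d i) := by
  refine ⟨hA.eigenvectorUnitary, hA.eigenvalues, ?_, ?_, ?_, fun h i => h.eigenvalues_nonneg i⟩
  · simpa [Matrix.star_eq_conjTranspose] using
      (Matrix.mem_unitaryGroup_iff'.mp hA.eigenvectorUnitary.2)
  · simpa [Matrix.star_eq_conjTranspose] using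
      (Matrix.mem_unitaryGroup_iff.mp hA.eigenvectorUnitary.2)
  · have h := hA.spectral_theorem
    rw [UD, ← Matrix.star_eq_conjTranspose]
    exact h

/-- Key contraction estimate. -/
lemma conj_diag_bound {U V : Matrix n n ℂ} (hU : Uᴴ * U = 1) (hV : V * Vᴴ = 1)
    (d : n → ℝ) (s : n → ℝ) (hs : ∀ i, |s i| ≤ 1) :
    ∑ i, s i * ((Vᴴ * UD U d * V) i i).re ≤ ∑ i, |d i| := by
  set W := Vᴴ * U with hW
  have hWW : Wᴴ * W = 1 := by
    rw [hW, Matrix.conjTranspose_mul, Matrix.conjTranspose_conjTranspose, Matrix.mul_assoc,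
      ← Matrix.mul_assoc V, hV, Matrix.one_mul, hU]
  have hcol : ∀ j, ∑ i, Complex.normSq (W i j) = 1 := by
    intro j
    have := congrArg (fun M => M j j) hWW
    simp only [Matrix.mul_apply, Matrix.conjTranspose_apply, Matrix.one_apply_eq] at this
    have : ∑ i, (Complex.normSq (W i j) : ℂ) = 1 := by
      simpa [Complex.normSq_eq_conj_mul_self] using this
    exact_mod_cast this
  have hent : ∀ i, ((Vᴴ * UD U d * V) i i).re = ∑ j, d j * Complex.normSq (W i j) := by
    intro i
    have hform : Vᴴ * UD U d * V = W * Matrix.diagonal (fun i => (d i : ℂ)) * Wᴴ := by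
      rw [UD, hW]
      simp only [Matrix.conjTranspose_mul, Matrix.conjTranspose_conjTranspose, Matrix.mul_assoc]
    rw [hform]
    simp only [Matrix.mul_apply, Matrix.diagonal_apply, mul_ite, mul_zero,
      Finset.sum_ite_eq', Finset.mem_univ, if_true, Matrix.conjTranspose_apply]
    rw [Complex.re_sum]
    congr 1; funext j
    have hterm : W i j * (d j : ℂ) * star (W i j)
        = ((d j * Complex.normSq (W i j) : ℝ) : ℂ) := by
      rw [Complex.star_def, mul_comm (W i j), mul_assoc, Complex.mul_conj]
      push_cast; ring
    rw [hterm, Complex.ofReal_re]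
  calc ∑ i, s i * ((Vᴴ * UD U d * V) i i).re
      = ∑ j, d j * (∑ i, s i * Complex.normSq (W i j)) := by
        simp only [hent, Finset.mul_sum]
        rw [Finset.sum_comm]
        congr 1; funext j; congr 1; funext i; ring
    _ ≤ ∑ j, |d j| := by
        refine Finset.sum_le_sum fun j _ => ?_
        have h1 : |∑ i, s i * Complex.normSq (W i j)| ≤ 1 := by
          calc |∑ i, s i * Complex.normSq (W i j)| ≤ ∑ i, |s i * Complex.normSq (W i j)| :=
                Finset.abs_sum_le_sum_abs _ _
            _ ≤ ∑ i, Complex.normSq (W i j) := by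
                refine Finset.sum_le_sum fun i _ => ?_
                rw [abs_mul, abs_of_nonneg (Complex.normSq_nonneg _)]
                exact mul_le_of_le_one_left (Complex.normSq_nonneg _) (hs i)
            _ = 1 := hcol j
        calc d j * (∑ i, s i * Complex.normSq (W i j)) ≤ |d j * _| := le_abs_self _
          _ = |d j| * |∑ i, s i * Complex.normSq (W i j)| := abs_mul _ _
          _ ≤ |d j| * 1 := by
              exact mul_le_mul_of_nonneg_left h1 (abs_nonneg _)
          _ = |d j| := mul_one _

end CAF
end H3

noncomputable section H4
namespace CAF
variable {n : Type*} [Fintype n] [DecidableEq n]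

lemma traceNorm_contraction {A : Matrix n n ℂ} (hA : A.IsHermitian)
    {V : Matrix n n ℂ} (hV : V * Vᴴ = 1) (s : n → ℝ) (hs : ∀ i, |s i| ≤ 1) :
    ∑ i, s i * ((Vᴴ * A * V) i i).re ≤ traceNorm A := by
  obtain ⟨U, d, hU1, hU2, hrep, -⟩ := exists_rep hA
  rw [hrep, traceNorm_UD hU1]
  exact conj_diag_bound hU1 hV d s hs

lemma traceNorm_add_le {A B : Matrix n n ℂ} (hA : A.IsHermitian) (hB : B.IsHermitian) :
    traceNorm (A + B) ≤ traceNorm A + traceNorm B := by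
  obtain ⟨U, e, hU1, hU2, hrep, -⟩ := exists_rep (hA.add hB)
  have hdiag : ∀ i, ((Uᴴ * (A + B) * U) i i).re = e i := by
    intro i
    have : Uᴴ * (A + B) * U = Matrix.diagonal (fun i => (e i : ℂ)) := by
      rw [hrep, UD]
      have h2 : Uᴴ * (U * Matrix.diagonal (fun i => (e i : ℂ)) * Uᴴ) * U
          = (Uᴴ * U) * Matrix.diagonal (fun i => (e i : ℂ)) * (Uᴴ * U) := by
        simp only [Matrix.mul_assoc]
      rw [h2, hU1, Matrix.one_mul, Matrix.mul_one]
    rw [this]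
    simp
  set s : n → ℝ := fun i => if e i < 0 then -1 else 1 with hsdef
  have hs : ∀ i, |s i| ≤ 1 := by
    intro i; rw [hsdef]; dsimp only; split <;> simp
  have habs : ∀ i, |e i| = s i * e i := by
    intro i; rw [hsdef]; dsimp only; split
    · rw [abs_of_neg (by assumption)]; ring
    · rw [abs_of_nonneg (le_of_not_gt (by assumption))]; ring
  calc traceNorm (A + B) = ∑ i, |e i| := by rw [hrep, traceNorm_UD hU1]
    _ = ∑ i, s i * ((Uᴴ * (A + B) * U) i i).re := by
        simp only [hdiag]; exact Finset.sum_congr rfl fun i _ => habs i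
    _ = ∑ i, s i * ((Uᴴ * A * U) i i).re + ∑ i, s i * ((Uᴴ * B * U) i i).re := by
        rw [← Finset.sum_add_distrib]
        congr 1; funext i
        have : Uᴴ * (A + B) * U = Uᴴ * A * U + Uᴴ * B * U := by
          rw [Matrix.mul_add, Matrix.add_mul]
        rw [this]
        simp only [Matrix.add_apply, Complex.add_re]
        ring
    _ ≤ traceNorm A + traceNorm B := by
        gcongr
        · exact traceNorm_contraction hA hU2 s hs
        · exact traceNorm_contraction hB hU2 s hs

lemma traceNorm_herm_nonneg {A : Matrix n n ℂ} (hA : A.IsHermitian) : 0 ≤ traceNorm A := by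
  obtain ⟨U, d, hU1, -, hrep, -⟩ := exists_rep hA
  rw [hrep, traceNorm_UD hU1]
  exact Finset.sum_nonneg fun i _ => abs_nonneg _

lemma traceNorm_zero : traceNorm (0 : Matrix n n ℂ) = 0 := by
  have h0 : (0 : Matrix n n ℂ) = UD 1 (fun _ => 0) := by
    simp [UD]
  rw [h0, traceNorm_UD (by simp)]
  simp

lemma traceNorm_smul {A : Matrix n n ℂ} (hA : A.IsHermitian) {c : ℝ} (hc : 0 ≤ c) :
    traceNorm ((c : ℂ) • A) = c * traceNorm A := by
  obtain ⟨U, d, hU1, -, hrep, -⟩ := exists_rep hA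
  have : (c : ℂ) • A = UD U (fun i => c * d i) := by
    have hd : Matrix.diagonal (fun i => ((c * d i : ℝ) : ℂ))
        = (c : ℂ) • Matrix.diagonal (fun i => (d i : ℂ)) := by
      ext p q
      rcases eq_or_ne p q with h | h <;>
        simp [Matrix.diagonal_apply, Matrix.smul_apply, h] <;> push_cast <;> ring
    rw [hrep, UD, UD]
    push_cast at hd ⊢
    rw [hd, Matrix.mul_smul, Matrix.smul_mul]
  rw [this, hrep, traceNorm_UD hU1, traceNorm_UD hU1, Finset.mul_sum]
  congr 1; funext i
  rw [abs_mul, abs_of_nonneg hc]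

lemma isHermitian_sum_smul {k : ℕ} (c : Fin k → ℝ) (B : Fin k → Matrix n n ℂ)
    (hB : ∀ i, (B i).IsHermitian) (s : Finset (Fin k)) :
    (∑ i ∈ s, (c i : ℂ) • B i).IsHermitian := by
  unfold Matrix.IsHermitian
  rw [Matrix.conjTranspose_sum]
  refine Finset.sum_congr rfl fun i _ => ?_
  rw [Matrix.conjTranspose_smul, (hB i).eq]
  congr 1
  simp [Complex.star_def, Complex.conj_ofReal]

lemma traceNorm_sum_le {k : ℕ} (c : Fin k → ℝ) (B : Fin k → Matrix n n ℂ)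
    (hB : ∀ i, (B i).IsHermitian) (hc : ∀ i, 0 ≤ c i) :
    traceNorm (∑ i, (c i : ℂ) • B i) ≤ ∑ i, c i * traceNorm (B i) := by
  classical
  induction (Finset.univ : Finset (Fin k)) using Finset.induction_on with
  | empty => simp [traceNorm_zero]
  | insert _ _ hnot ih =>
      rename_i a s
      rw [Finset.sum_insert hnot, Finset.sum_insert hnot]
      calc traceNorm ((c a : ℂ) • B a + ∑ i ∈ s, (c i : ℂ) • B i)
          ≤ traceNorm ((c a : ℂ) • B a) + traceNorm (∑ i ∈ s, (c i : ℂ) • B i) := by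
            refine traceNorm_add_le ?_ (isHermitian_sum_smul c B hB s)
            have := isHermitian_sum_smul c B hB {a}
            simpa using this
        _ ≤ c a * traceNorm (B a) + ∑ i ∈ s, c i * traceNorm (B i) :=
            add_le_add (traceNorm_smul (hB a) (hc a)).le ih

end CAF
end H4

noncomputable section H5
namespace CAF
open Polynomial
variable {n : Type*} [Fintype n] [DecidableEq n]

lemma conj_pow {U X : Matrix n n ℂ} (hU1 : Uᴴ * U = 1) (hU2 : U * Uᴴ = 1) (k : ℕ) :
    (U * X * Uᴴ) ^ k = U * X ^ k * Uᴴ := by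
  induction k with
  | zero => simp [hU2]
  | succ k ih =>
      rw [pow_succ, ih, pow_succ]
      have : U * X ^ k * Uᴴ * (U * X * Uᴴ) = U * X ^ k * (Uᴴ * U) * X * Uᴴ := by
        simp only [Matrix.mul_assoc]
      rw [this, hU1, Matrix.mul_one]
      simp only [Matrix.mul_assoc]

lemma aeval_conj {U X : Matrix n n ℂ} (hU1 : Uᴴ * U = 1) (hU2 : U * Uᴴ = 1) (p : ℂ[X]) :
    aeval (U * X * Uᴴ) p = U * aeval X p * Uᴴ := by
  induction p using Polynomial.induction_on' with
  | add p q hp hq =>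
      rw [map_add, map_add, hp, hq, Matrix.mul_add, Matrix.add_mul]
  | monomial k a =>
      rw [aeval_monomial, aeval_monomial, conj_pow hU1 hU2, ← Algebra.smul_def,
        ← Algebra.smul_def, Matrix.mul_smul, Matrix.smul_mul]

lemma aeval_diagonal (d : n → ℂ) (p : ℂ[X]) :
    aeval (Matrix.diagonal d) p = Matrix.diagonal (fun i => p.eval (d i)) := by
  induction p using Polynomial.induction_on' with
  | add p q hp hq => rw [map_add, hp, hq, Matrix.diagonal_add]; simp
  | monomial k a =>
      rw [aeval_monomial, Matrix.diagonal_pow, ← Algebra.smul_def]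
      ext p q
      rcases eq_or_ne p q with h | h <;>
        simp [Matrix.diagonal_apply, h, eval_monomial]

lemma trace_aeval_UD {U : Matrix n n ℂ} (hU1 : Uᴴ * U = 1) (hU2 : U * Uᴴ = 1)
    (d : n → ℝ) (p : ℂ[X]) :
    (aeval (UD U d) p).trace = ∑ i, p.eval ((d i : ℂ)) := by
  rw [UD, aeval_conj hU1 hU2, Matrix.trace_mul_cycle, hU1, Matrix.one_mul, aeval_diagonal,
    Matrix.trace_diagonal]

end CAF
end H5

noncomputable section H6
namespace CAF
open Polynomial
variable {n : Type*} [Fintype n] [DecidableEq n]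

lemma pow_conjTranspose_mul (A : Matrix n n ℂ) (k : ℕ) :
    (Aᴴ * A) ^ (k + 1) = Aᴴ * (A * Aᴴ) ^ k * A := by
  induction k with
  | zero => simp
  | succ k ih =>
      rw [pow_succ, ih, pow_succ]
      simp only [Matrix.mul_assoc]

lemma trace_pow_comm (A : Matrix n n ℂ) (k : ℕ) (hk : k ≠ 0) :
    ((Aᴴ * A) ^ k).trace = ((A * Aᴴ) ^ k).trace := by
  obtain ⟨m, rfl⟩ := Nat.exists_eq_succ_of_ne_zero hk
  rw [pow_conjTranspose_mul, Matrix.trace_mul_cycle]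
  conv_rhs => rw [pow_succ']

lemma traceNorm_conjTranspose (A : Matrix n n ℂ) :
    traceNorm Aᴴ = traceNorm A := by
  obtain ⟨U, d, hU1, hU2, hrepP, hdnn⟩ :=
    exists_rep (Matrix.posSemidef_conjTranspose_mul_self A).1
  obtain ⟨V, f, hV1, hV2, hrepQ, hfnn⟩ :=
    exists_rep (Matrix.posSemidef_self_mul_conjTranspose A).1
  have hd := hdnn (Matrix.posSemidef_conjTranspose_mul_self A)
  have hf := hfnn (Matrix.posSemidef_self_mul_conjTranspose A)
  have hTNA : traceNorm A = ∑ i, Real.sqrt (d i) :=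
    re_trace_sqrt hU1 d hd _ hrepP
  have hTNAH : traceNorm Aᴴ = ∑ i, Real.sqrt (f i) := by
    rw [traceNorm_eq_of Aᴴ (Matrix.posSemidef_self_mul_conjTranspose A)
      (by rw [Matrix.conjTranspose_conjTranspose])]
    exact re_trace_sqrt hV1 f hf _ hrepQ
  -- interpolation polynomial
  set s : Finset ℝ := (Finset.univ.image d ∪ Finset.univ.image f) ∪ {0} with hs
  set q : ℝ[X] := Lagrange.interpolate s id Real.sqrt with hq
  have hInj : Set.InjOn id (s : Set ℝ) := Function.injective_id.injOn
  have heval : ∀ x ∈ s, q.eval x = Real.sqrt x := fun x hx =>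
    Lagrange.eval_interpolate_at_node _ hInj hx
  have h0 : q.eval 0 = 0 := by
    rw [heval 0 (by simp [hs])]; exact Real.sqrt_zero
  set qc : ℂ[X] := q.map (algebraMap ℝ ℂ) with hqc
  have hqc0 : qc.coeff 0 = 0 := by
    rw [hqc, Polynomial.coeff_map, Polynomial.coeff_zero_eq_eval_zero, h0, map_zero]
  have hevalc : ∀ x ∈ s, qc.eval ((x : ℝ) : ℂ) = ((Real.sqrt x : ℝ) : ℂ) := by
    intro x hx
    rw [hqc, ← heval x hx, Polynomial.eval_map, ← Complex.coe_algebraMap,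
      Polynomial.eval₂_at_apply, Complex.coe_algebraMap]
  -- traces of aeval agree
  have htr : (aeval (Aᴴ * A) qc).trace = (aeval (A * Aᴴ) qc).trace := by
    rw [Polynomial.aeval_eq_sum_range (R := ℂ) (p := qc) (Aᴴ * A),
      Polynomial.aeval_eq_sum_range (R := ℂ) (p := qc) (A * Aᴴ),
      Matrix.trace_sum, Matrix.trace_sum]
    refine Finset.sum_congr rfl fun k hk => ?_
    rcases Nat.eq_zero_or_pos k with h | h
    · subst h; rw [hqc0]; simp
    · rw [Matrix.trace_smul, Matrix.trace_smul, trace_pow_comm A k (Nat.pos_iff_ne_zero.mp h)]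
  have hdmem : ∀ i, d i ∈ s := fun i => by simp [hs]
  have hfmem : ∀ i, f i ∈ s := fun i => by simp [hs]
  have hL : (aeval (Aᴴ * A) qc).trace = ((∑ i, Real.sqrt (d i) : ℝ) : ℂ) := by
    rw [hrepP, trace_aeval_UD hU1 hU2]
    push_cast
    exact Finset.sum_congr rfl fun i _ => hevalc (d i) (hdmem i)
  have hR : (aeval (A * Aᴴ) qc).trace = ((∑ i, Real.sqrt (f i) : ℝ) : ℂ) := by
    rw [hrepQ, trace_aeval_UD hV1 hV2]
    push_cast
    exact Finset.sum_congr rfl fun i _ => hevalc (f i) (hfmem i)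
  rw [hTNA, hTNAH]
  have := hL.symm.trans (htr.trans hR)
  exact_mod_cast this.symm

end CAF
end H6

noncomputable section H7
namespace CAF
variable {n : Type*} [Fintype n] [DecidableEq n] {m : Type*} [Fintype m] [DecidableEq m]

lemma traceNorm_mul_unitary (A : Matrix n n ℂ) {V : Matrix n n ℂ}
    (hV1 : Vᴴ * V = 1) (hV2 : V * Vᴴ = 1) :
    traceNorm (A * V) = traceNorm A := by
  obtain ⟨U, d, hU1, hU2, hrepP, hdnn⟩ :=
    exists_rep (Matrix.posSemidef_conjTranspose_mul_self A).1
  have hd := hdnn (Matrix.posSemidef_conjTranspose_mul_self A)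
  set W := Vᴴ * U with hW
  have hW1 : Wᴴ * W = 1 := by
    rw [hW, Matrix.conjTranspose_mul, Matrix.conjTranspose_conjTranspose, Matrix.mul_assoc,
      ← Matrix.mul_assoc V, hV2, Matrix.one_mul, hU1]
  have key : (A * V)ᴴ * (A * V) = UD W d := by
    rw [Matrix.conjTranspose_mul]
    have h2 : Vᴴ * Aᴴ * (A * V) = Vᴴ * (Aᴴ * A) * V := by simp only [Matrix.mul_assoc]
    rw [h2, hrepP, UD, UD, hW, Matrix.conjTranspose_mul, Matrix.conjTranspose_conjTranspose]
    simp only [Matrix.mul_assoc]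
  rw [traceNorm_eq_of (A * V) (UD_psd d hd) key,
    re_trace_sqrt hW1 d hd _ rfl,
    traceNorm_eq_of A ((Matrix.posSemidef_conjTranspose_mul_self A)) rfl,
    re_trace_sqrt hU1 d hd _ hrepP]

lemma traceNorm_transpose (A : Matrix n n ℂ) : traceNorm Aᵀ = traceNorm A := by
  obtain ⟨V, f, hV1, hV2, hrepQ, hfnn⟩ :=
    exists_rep (Matrix.posSemidef_self_mul_conjTranspose A).1
  have hf := hfnn (Matrix.posSemidef_self_mul_conjTranspose A)
  set Vc := V.map (starRingEnd ℂ) with hVc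
  have hVc1 : Vcᴴ * Vc = 1 := by
    have h2 : Vcᴴ * Vc = (Vᴴ * V).map (starRingEnd ℂ) := by
      ext p q
      simp only [Matrix.mul_apply, Matrix.map_apply, Matrix.conjTranspose_apply, map_sum,
        _root_.map_mul, hVc, Complex.star_def, Complex.conj_conj]
    rw [h2, hV1, Matrix.map_one _ (map_zero _) (map_one _)]
  have key : (Aᵀ)ᴴ * Aᵀ = UD Vc f := by
    have h1 : (Aᵀ)ᴴ * Aᵀ = (A * Aᴴ).map (starRingEnd ℂ) := by
      ext p q
      simp only [Matrix.mul_apply, Matrix.map_apply, Matrix.conjTranspose_apply,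
        Matrix.transpose_apply, map_sum, _root_.map_mul, Complex.star_def, Complex.conj_conj]
    have hdiagmap : (Matrix.diagonal (fun i => (f i : ℂ))).map (starRingEnd ℂ)
        = Matrix.diagonal (fun i => (f i : ℂ)) := by
      ext p q
      rcases eq_or_ne p q with h | h <;>
        simp [Matrix.diagonal_apply, h, Matrix.map_apply, Complex.conj_ofReal]
    have hconjmap : Vᴴ.map (starRingEnd ℂ) = Vcᴴ := by
      ext p q
      simp [Matrix.conjTranspose_apply, Matrix.map_apply, hVc]
    rw [h1, hrepQ, UD, UD, _root_.Matrix.map_mul, _root_.Matrix.map_mul, hdiagmap, hconjmap]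
  rw [traceNorm_eq_of Aᵀ (UD_psd f hf) key, re_trace_sqrt hVc1 f hf _ rfl,
    ← traceNorm_conjTranspose A,
    traceNorm_eq_of Aᴴ (Matrix.posSemidef_self_mul_conjTranspose A)
      (by rw [Matrix.conjTranspose_conjTranspose]),
    re_trace_sqrt hV1 f hf _ hrepQ]

lemma kronecker_conjTranspose (A : Matrix n n ℂ) (B : Matrix m m ℂ) :
    (A ⊗ₖ B)ᴴ = Aᴴ ⊗ₖ Bᴴ := by
  ext p q
  simp [Matrix.conjTranspose_apply, Matrix.kroneckerMap_apply]

lemma traceNorm_kronecker (A : Matrix n n ℂ) (B : Matrix m m ℂ) :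
    traceNorm (A ⊗ₖ B) = traceNorm A * traceNorm B := by
  obtain ⟨U, d, hU1, hU2, hrepP, hdnn⟩ :=
    exists_rep (Matrix.posSemidef_conjTranspose_mul_self A).1
  have hd := hdnn (Matrix.posSemidef_conjTranspose_mul_self A)
  obtain ⟨V, f, hV1, hV2, hrepQ, hfnn⟩ :=
    exists_rep (Matrix.posSemidef_conjTranspose_mul_self B).1
  have hf := hfnn (Matrix.posSemidef_conjTranspose_mul_self B)
  set W := U ⊗ₖ V with hW
  have hW1 : Wᴴ * W = 1 := by
    rw [hW, kronecker_conjTranspose, ← Matrix.mul_kronecker_mul, hU1, hV1,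
      Matrix.one_kronecker_one]
  have key : (A ⊗ₖ B)ᴴ * (A ⊗ₖ B) = UD W (fun p => d p.1 * f p.2) := by
    rw [kronecker_conjTranspose, ← Matrix.mul_kronecker_mul, hrepP, hrepQ]
    simp only [UD, hW]
    rw [Matrix.mul_kronecker_mul, Matrix.mul_kronecker_mul,
      Matrix.diagonal_kronecker_diagonal, kronecker_conjTranspose]
    congr 2
    funext p
    push_cast
    rfl
  have hdf : ∀ p : n × m, 0 ≤ d p.1 * f p.2 := fun p => mul_nonneg (hd p.1) (hf p.2)
  rw [traceNorm_eq_of (A ⊗ₖ B) (UD_psd _ hdf) key, re_trace_sqrt hW1 _ hdf _ rfl,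
    traceNorm_eq_of A (Matrix.posSemidef_conjTranspose_mul_self A) rfl,
    re_trace_sqrt hU1 d hd _ hrepP,
    traceNorm_eq_of B (Matrix.posSemidef_conjTranspose_mul_self B) rfl,
    re_trace_sqrt hV1 f hf _ hrepQ, Fintype.sum_prod_type, Finset.sum_mul_sum]
  exact Finset.sum_congr rfl fun i _ => Finset.sum_congr rfl fun j _ => Real.sqrt_mul (hd i) _

end CAF
end H7

noncomputable section H8
namespace CAF
variable {n : Type*} [Fintype n] [DecidableEq n]

/-- The swap matrix. -/
def swapM (n : Type*) [DecidableEq n] : Matrix (n × n) (n × n) ℂ :=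
  Matrix.of fun p q => if p.1 = q.2 ∧ p.2 = q.1 then 1 else 0

lemma swapM_conjTranspose : (swapM n)ᴴ = swapM n := by
  have hiff : ∀ p q : n × n, (q.1 = p.2 ∧ q.2 = p.1) ↔ (p.1 = q.2 ∧ p.2 = q.1) :=
    fun p q => ⟨fun ⟨a, b⟩ => ⟨b.symm, a.symm⟩, fun ⟨a, b⟩ => ⟨b.symm, a.symm⟩⟩
  ext p q
  simp only [Matrix.conjTranspose_apply, swapM, Matrix.of_apply, hiff p q]
  split <;> simp

lemma swapM_mul_self : swapM n * swapM n = 1 := by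
  ext p q
  rw [Matrix.mul_apply]
  rw [Finset.sum_eq_single (p.2, p.1)]
  · simp only [swapM, Matrix.of_apply]
    rcases eq_or_ne p q with h | h
    · subst h; simp [Matrix.one_apply]
    · have : ¬(p.2 = q.2 ∧ p.1 = q.1) := by
        intro ⟨a, b⟩; exact h (Prod.ext b a)
      simp [Matrix.one_apply, h, this]
  · intro r _ hr
    simp only [swapM, Matrix.of_apply]
    have : ¬(p.1 = r.2 ∧ p.2 = r.1) := by
      intro ⟨a, b⟩
      exact hr (Prod.ext b.symm a.symm)
    simp [this]
  · simp

lemma swapM_unitary1 : (swapM n)ᴴ * swapM n = 1 := by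
  rw [swapM_conjTranspose, swapM_mul_self]

lemma swapM_unitary2 : swapM n * (swapM n)ᴴ = 1 := by
  rw [swapM_conjTranspose, swapM_mul_self]

/-- Matrix of a bipartite vector. -/
def vecM (ψ : n × n → ℂ) : Matrix n n ℂ := Matrix.of fun i j => ψ (i, j)

lemma pt2_outer (ψ : n × n → ℂ) :
    pt₂ (outer ψ) = (vecM ψ ⊗ₖ (vecM ψ)ᴴ) * swapM n := by
  ext p q
  rw [Matrix.mul_apply, Finset.sum_eq_single (q.2, q.1)]
  · simp [pt₂, outer, vecM, swapM, Matrix.kroneckerMap_apply, Matrix.conjTranspose_apply,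
      mul_comm]
  · intro r _ hr
    have : ¬(r.1 = q.2 ∧ r.2 = q.1) := by
      intro ⟨a, b⟩
      exact hr (Prod.ext a b)
    simp [swapM, this]
  · simp

lemma ptr2_outer (ψ : n × n → ℂ) : ptr₂ (outer ψ) = vecM ψ * (vecM ψ)ᴴ := by
  ext i k
  simp [ptr₂, outer, vecM, Matrix.mul_apply, Matrix.conjTranspose_apply]

lemma traceNorm_pt2_outer (ψ : n × n → ℂ) :
    traceNorm (pt₂ (outer ψ)) = traceNorm (vecM ψ)ᴴ * traceNorm (vecM ψ)ᴴ := by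
  rw [pt2_outer, traceNorm_mul_unitary _ swapM_unitary1 swapM_unitary2,
    traceNorm_kronecker, traceNorm_conjTranspose]

end CAF
end H8

noncomputable section H9
namespace CAF
variable {n : Type*} [Fintype n] [DecidableEq n]

lemma sum_diag' (s : Finset n) (g : n × n → ℝ) :
    ∑ p ∈ s.diag, g p = ∑ i ∈ s, g (i, i) := by
  refine Finset.sum_nbij' (fun p => p.1) (fun i => (i, i)) ?_ ?_ ?_ ?_ ?_
  · intro p hp
    exact (Finset.mem_diag.mp hp).1
  · intro i hi
    exact Finset.mem_diag.mpr ⟨hi, rfl⟩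
  · intro p hp
    obtain ⟨h1, h2⟩ := Finset.mem_diag.mp hp
    exact Prod.ext rfl h2
  · intro i hi
    rfl
  · intro p hp
    obtain ⟨h1, h2⟩ := Finset.mem_diag.mp hp
    have hpp : (p.1, p.1) = p := Prod.ext rfl h2
    exact (congrArg g hpp).symm

lemma sq_sum_split (ν : n → ℝ) (f : ℝ → ℝ) :
    (∑ i, f (ν i)) ^ 2 = ∑ i, f (ν i) ^ 2 + ∑ p ∈ Finset.univ.offDiag, f (ν p.1) * f (ν p.2) := by
  rw [pow_two, Finset.sum_mul_sum, ← Finset.sum_product', ← Finset.diag_union_offDiag,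
    Finset.sum_union (Finset.disjoint_diag_offDiag _), sum_diag']
  simp [pow_two]

/-- The core scalar inequality. -/
lemma core_ineq (ν : n → ℝ) (hν : ∀ i, 0 ≤ ν i) (h1 : ∑ i, ν i = 1) :
    Real.sqrt (2 / ((Fintype.card n : ℝ) * ((Fintype.card n : ℝ) - 1))) *
      ((∑ i, Real.sqrt (ν i)) ^ 2 - 1) ≤ Real.sqrt (2 * (1 - ∑ i, ν i ^ 2)) := by
  classical
  set x : ℝ := (Fintype.card n : ℝ) * ((Fintype.card n : ℝ) - 1) with hx
  set D : ℝ := ∑ p ∈ Finset.univ.offDiag, Real.sqrt (ν p.1) * Real.sqrt (ν p.2) with hD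
  set E : ℝ := ∑ p ∈ Finset.univ.offDiag, ν p.1 * ν p.2 with hE
  have hDnn : 0 ≤ D :=
    Finset.sum_nonneg fun p _ => mul_nonneg (Real.sqrt_nonneg _) (Real.sqrt_nonneg _)
  have hEnn : 0 ≤ E :=
    Finset.sum_nonneg fun p _ => mul_nonneg (hν _) (hν _)
  have hsq : (∑ i, Real.sqrt (ν i)) ^ 2 - 1 = D := by
    have := sq_sum_split ν Real.sqrt
    rw [this]
    have h2 : ∑ i, Real.sqrt (ν i) ^ 2 = 1 := by
      rw [← h1]
      exact Finset.sum_congr rfl fun i _ => Real.sq_sqrt (hν i)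
    rw [h2]; ring
  have hpe : 1 - ∑ i, ν i ^ 2 = E := by
    have := sq_sum_split ν id
    simp only [id] at this
    rw [h1, one_pow] at this
    linarith
  have hcard : ((Finset.univ : Finset n).offDiag.card : ℝ) = x := by
    rw [Finset.offDiag_card, hx]
    rcases Nat.eq_zero_or_pos (Fintype.card n) with h | h
    · simp [Finset.card_univ, h]
    · rw [Finset.card_univ, Nat.cast_sub (Nat.le_mul_of_pos_left _ h)]
      push_cast
      ring
  have hxnn : 0 ≤ x := by
    rw [← hcard]; positivity
  have hCS : D ^ 2 ≤ x * E := by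
    have := Finset.sum_mul_sq_le_sq_mul_sq Finset.univ.offDiag (fun _ => (1 : ℝ))
      (fun p => Real.sqrt (ν p.1) * Real.sqrt (ν p.2))
    simp only [one_mul, one_pow] at this
    calc D ^ 2 ≤ (∑ _p ∈ Finset.univ.offDiag, (1:ℝ)) *
          ∑ p ∈ Finset.univ.offDiag, (Real.sqrt (ν p.1) * Real.sqrt (ν p.2)) ^ 2 := this
      _ = x * E := by
          rw [Finset.sum_const, nsmul_eq_mul, mul_one, hcard]
          congr 1
          refine Finset.sum_congr rfl fun p _ => ?_
          rw [mul_pow, Real.sq_sqrt (hν _), Real.sq_sqrt (hν _)]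
  have hDle : D ≤ Real.sqrt x * Real.sqrt E := by
    rw [← Real.sqrt_mul hxnn]
    calc D = Real.sqrt (D ^ 2) := (Real.sqrt_sq hDnn).symm
      _ ≤ Real.sqrt (x * E) := Real.sqrt_le_sqrt hCS
  have hcx : Real.sqrt (2 / x) * Real.sqrt x ≤ Real.sqrt 2 := by
    rw [← Real.sqrt_mul (by positivity)]
    refine Real.sqrt_le_sqrt ?_
    rcases eq_or_ne x 0 with h | h
    · simp [h]
    · rw [div_mul_cancel₀ _ h]
  rw [hsq, hpe, Real.sqrt_mul (by norm_num)]
  calc Real.sqrt (2 / x) * D ≤ Real.sqrt (2 / x) * (Real.sqrt x * Real.sqrt E) := by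
        exact mul_le_mul_of_nonneg_left hDle (Real.sqrt_nonneg _)
    _ = (Real.sqrt (2 / x) * Real.sqrt x) * Real.sqrt E := by ring
    _ ≤ Real.sqrt 2 * Real.sqrt E :=
        mul_le_mul_of_nonneg_right hcx (Real.sqrt_nonneg _)

end CAF
end H9

noncomputable section H10
namespace CAF
variable {n : Type*} [Fintype n] [DecidableEq n]

lemma star_mul_self_eq (z : ℂ) : z * star z = ((‖z‖ ^ 2 : ℝ) : ℂ) := by
  rw [show star z = (starRingEnd ℂ) z from rfl, Complex.mul_conj, Complex.normSq_eq_norm_sq]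

lemma pure_data (ψ : n × n → ℂ) (hψ : vnormSq ψ = 1) :
    ∃ ν : n → ℝ, (∀ i, 0 ≤ ν i) ∧ (∑ i, ν i = 1) ∧
      traceNorm (pt₂ (outer ψ)) = (∑ i, Real.sqrt (ν i)) ^ 2 ∧
      purity (ptr₂ (outer ψ)) = ∑ i, ν i ^ 2 := by
  have hQ := Matrix.posSemidef_self_mul_conjTranspose (vecM ψ)
  obtain ⟨V, ν, hV1, hV2, hrep, hnn⟩ := exists_rep hQ.1
  have hν := hnn hQ
  refine ⟨ν, hν, ?_, ?_, ?_⟩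
  · -- trace = 1
    have htr : (vecM ψ * (vecM ψ)ᴴ).trace = ((vnormSq ψ : ℝ) : ℂ) := by
      rw [Matrix.trace]
      unfold vnormSq
      push_cast
      rw [Fintype.sum_prod_type]
      refine Finset.sum_congr rfl fun i _ => ?_
      simp only [Matrix.diag_apply, Matrix.mul_apply, Matrix.conjTranspose_apply, vecM,
        Matrix.of_apply]
      exact Finset.sum_congr rfl fun j _ => by rw [star_mul_self_eq]; push_cast; rfl
    have h2 : ((∑ i, ν i : ℝ) : ℂ) = ((1 : ℝ) : ℂ) := by
      push_cast
      rw [← UD_trace hV1, ← hrep, htr, hψ]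
      norm_num
    exact_mod_cast h2
  · rw [traceNorm_pt2_outer, ← pow_two,
      traceNorm_eq_of (vecM ψ)ᴴ hQ (by rw [Matrix.conjTranspose_conjTranspose]),
      re_trace_sqrt hV1 ν hν _ hrep]
  · unfold purity
    rw [ptr2_outer, hrep, UD_mul hV1, UD_trace hV1]
    have : ∑ i, ((ν i * ν i : ℝ) : ℂ) = ((∑ i, ν i ^ 2 : ℝ) : ℂ) := by
      push_cast; refine Finset.sum_congr rfl fun i _ => by ring
    rw [this, Complex.ofReal_re]

lemma pure_est (ψ : n × n → ℂ) (hψ : vnormSq ψ = 1) :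
    Real.sqrt (2 / ((Fintype.card n : ℝ) * ((Fintype.card n : ℝ) - 1))) *
      (traceNorm (pt₂ (outer ψ)) - 1) ≤ concPure ψ := by
  obtain ⟨ν, hν, h1, htn, hpur⟩ := pure_data ψ hψ
  rw [htn, concPure, hpur]
  exact core_ineq ν hν h1

lemma outer_herm (ψ : n × n → ℂ) : (outer ψ).IsHermitian := by
  unfold Matrix.IsHermitian
  ext p q
  simp [outer, Matrix.conjTranspose_apply, mul_comm]

lemma pt2_herm {ρ : Matrix (n × n) (n × n) ℂ} (h : ρ.IsHermitian) : (pt₂ ρ).IsHermitian := by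
  unfold Matrix.IsHermitian at h ⊢
  ext p q
  have := congrFun (congrFun h (p.1, q.2)) (q.1, p.2)
  simpa [pt₂, Matrix.conjTranspose_apply] using this

lemma pt2_sum {k : ℕ} (p : Fin k → ℝ) (ψ : Fin k → (n × n → ℂ)) :
    pt₂ (∑ i, (p i : ℂ) • outer (ψ i)) = ∑ i, (p i : ℂ) • pt₂ (outer (ψ i)) := by
  ext a b
  simp [pt₂, Matrix.sum_apply, Matrix.smul_apply]

lemma pt1_eq_pt2_transpose (ρ : Matrix (n × n) (n × n) ℂ) : pt₁ ρ = (pt₂ ρ)ᵀ := rfl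

lemma decomp_bound (ρ : Matrix (n × n) (n × n) ℂ) {r : ℝ}
    (hr : r ∈ decompAvgs concPure ρ) :
    Real.sqrt (2 / ((Fintype.card n : ℝ) * ((Fintype.card n : ℝ) - 1))) *
      (traceNorm (pt₂ ρ) - 1) ≤ r := by
  set c := Real.sqrt (2 / ((Fintype.card n : ℝ) * ((Fintype.card n : ℝ) - 1))) with hc
  have hcnn : 0 ≤ c := Real.sqrt_nonneg _
  obtain ⟨k, p, ψ, hp, hsum, hunit, hdecomp, hrval⟩ := hr
  have h1 : traceNorm (pt₂ ρ) ≤ ∑ i, p i * traceNorm (pt₂ (outer (ψ i))) := by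
    rw [hdecomp, pt2_sum]
    exact traceNorm_sum_le p _ (fun i => pt2_herm (outer_herm (ψ i))) (fun i => (hp i).le)
  calc c * (traceNorm (pt₂ ρ) - 1)
      ≤ c * ((∑ i, p i * traceNorm (pt₂ (outer (ψ i)))) - 1) := by
        exact mul_le_mul_of_nonneg_left (sub_le_sub_right h1 1) hcnn
    _ = ∑ i, p i * (c * (traceNorm (pt₂ (outer (ψ i))) - 1)) := by
        calc c * ((∑ i, p i * traceNorm (pt₂ (outer (ψ i)))) - 1)
            = c * ((∑ i, p i * traceNorm (pt₂ (outer (ψ i)))) - ∑ i, p i) := by rw [hsum]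
          _ = ∑ i, p i * (c * (traceNorm (pt₂ (outer (ψ i))) - 1)) := by
              rw [← Finset.sum_sub_distrib, Finset.mul_sum]
              exact Finset.sum_congr rfl fun i _ => by ring
    _ ≤ ∑ i, p i * concPure (ψ i) :=
        Finset.sum_le_sum fun i _ =>
          mul_le_mul_of_nonneg_left (pure_est (ψ i) (hunit i)) (hp i).le
    _ = r := hrval.symm

end CAF
end H10

noncomputable section H11
namespace CAF
variable {n : Type*} [Fintype n] [DecidableEq n]

lemma UD_eq_sum_outer {m : Type*} [Fintype m] [DecidableEq m] (U : Matrix m m ℂ) (e : m → ℝ) :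
    UD U e = ∑ j, (e j : ℂ) • outer (fun x => U x j) := by
  ext a b
  simp only [UD, Matrix.mul_apply, Matrix.diagonal_apply, mul_ite, mul_zero,
    Finset.sum_ite_eq', Finset.mem_univ, if_true, Matrix.conjTranspose_apply,
    Matrix.sum_apply, Matrix.smul_apply, outer, Matrix.of_apply, smul_eq_mul]
  exact Finset.sum_congr rfl fun j _ => by ring

lemma decomp_nonempty {m m' : Type*} [Fintype m] [DecidableEq m] [Fintype m'] [DecidableEq m']
    (ρ : Matrix (m × m') (m × m') ℂ) (hρ : IsDensity ρ) :
    (decompAvgs concPure ρ).Nonempty := by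
  classical
  obtain ⟨U, e, hU1, hU2, hrep, hnn⟩ := exists_rep hρ.1.1
  have he := hnn hρ.1
  set t : Finset (m × m') := Finset.univ.filter (fun j => e j ≠ 0) with ht
  set et : ↥t ≃ Fin t.card := t.equivFin with het
  set pf : Fin t.card → ℝ := fun i => e ((et.symm i) : m × m') with hpf
  set ψf : Fin t.card → (m × m' → ℂ) := fun i x => U x ((et.symm i) : m × m') with hψf
  have hpos : ∀ i, 0 < pf i := by
    intro i
    have hmem := (et.symm i).2
    have h2 := (Finset.mem_filter.mp hmem).2
    exact lt_of_le_of_ne (he _) (Ne.symm h2)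
  have hcol : ∀ j : m × m', vnormSq (fun x => U x j) = 1 := by
    intro j
    have hd := congrFun (congrFun hU1 j) j
    simp only [Matrix.mul_apply, Matrix.conjTranspose_apply, Matrix.one_apply_eq] at hd
    have : ((vnormSq (fun x => U x j) : ℝ) : ℂ) = 1 := by
      rw [← hd]
      unfold vnormSq
      push_cast
      refine Finset.sum_congr rfl fun x _ => ?_
      rw [mul_comm, star_mul_self_eq]
      norm_cast
    exact_mod_cast this
  have hsum_univ : ∀ (F : m × m' → Matrix (m × m') (m × m') ℂ),
      (∀ j ∉ t, F j = 0) → ∑ j, F j = ∑ i : Fin t.card, F ((et.symm i) : m × m') := by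
    intro F hF
    rw [← Finset.sum_subset (Finset.subset_univ t) (fun j _ hj => hF j hj)]
    rw [← Finset.sum_coe_sort t F]
    exact (Equiv.sum_comp et.symm (fun a : ↥t => F ↑a)).symm
  have hsum_real : ∑ i, pf i = 1 := by
    have h1 : ((∑ j, e j : ℝ) : ℂ) = 1 := by
      push_cast
      rw [← UD_trace hU1, ← hrep, hρ.2]
    have h2 : ∑ j, e j = 1 := by exact_mod_cast h1
    have h3 : ∑ j ∈ t, e j = ∑ j, e j := by
      refine Finset.sum_subset (Finset.subset_univ t) fun j _ hj => ?_
      by_contra hne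
      exact hj (Finset.mem_filter.mpr ⟨Finset.mem_univ _, hne⟩)
    have h4 : ∑ i, pf i = ∑ j ∈ t, e j := by
      rw [← Finset.sum_coe_sort t e]
      exact Equiv.sum_comp et.symm (fun a : ↥t => e ↑a)
    rw [h4, h3, h2]
  have hdecomp : ρ = ∑ i : Fin t.card, (pf i : ℂ) • outer (ψf i) := by
    rw [hrep, UD_eq_sum_outer]
    exact hsum_univ (fun j => (e j : ℂ) • outer (fun x => U x j)) fun j hj => by
      have hz : e j = 0 := by
        by_contra hne
        exact hj (Finset.mem_filter.mpr ⟨Finset.mem_univ _, hne⟩)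
      simp [hz]
  exact ⟨∑ i, pf i * concPure (ψf i), t.card, pf, ψf, hpos, hsum_real,
    fun i => hcol _, hdecomp, rfl⟩

end CAF
end H11

/-- Chen–Albeverio–Fei lower bound on the convex-roof I-concurrence:
`C[ρ] ≥ √(2/(N(N−1))) · max{‖ρ^{T₁}‖₁ − 1, ‖ρ^{T₂}‖₁ − 1}`. -/
theorem stmt16 {N : ℕ} (hN : 0 < N)
    (ρ : Matrix (Fin N × Fin N) (Fin N × Fin N) ℂ) (hρ : IsDensity ρ) :
    Real.sqrt (2 / ((N : ℝ) * ((N : ℝ) - 1))) *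
        max (traceNorm (pt₁ ρ) - 1) (traceNorm (pt₂ ρ) - 1)
      ≤ sInf (decompAvgs concPure ρ) := by
  have hne := CAF.decomp_nonempty ρ hρ
  refine le_csInf hne fun r hr => ?_
  have hb := CAF.decomp_bound ρ hr
  rw [Fintype.card_fin] at hb
  have h12 : traceNorm (pt₁ ρ) = traceNorm (pt₂ ρ) := by
    rw [CAF.pt1_eq_pt2_transpose, CAF.traceNorm_transpose]
  rw [h12, max_self]
  exact hb
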